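/- Let Ω be a nonempty finite type and let E = ⟨𝓔, mod⟩ be an epistemic space over Ω. Then there exists a full meet revision operator for E if and only if E satisfies (Unbiased): for every M ⊆ Ω there exists Ψ_M ∈ 𝓔 with mod(Ψ_M) = M. -/
import Mathlib


open Set

/-- `minSet r S` is the set of `r`-minimal elements of `S`:
`min(S, r) = {ω ∈ S : r ω ω' for all ω' ∈ S}`. -/
def minSet {Ω : Type*} (r : Ω → Ω → Prop) (S : Set Ω) : Set Ω :=
  {ω ∈ S | ∀ ω' ∈ S, r ω ω'}

/-- A linear order as a relation: total, antisymmetric and transitive. -/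
def IsLinRel {Ω : Type*} (r : Ω → Ω → Prop) : Prop :=
  (∀ a b, r a b ∨ r b a) ∧ (∀ a b, r a b → r b a → a = b) ∧
    (∀ a b c, r a b → r b c → r a c)

/-- AGM contraction operator for the epistemic space `⟨E, md⟩` (postulates C1–C7,
formulated on model sets). -/
def IsContraction {Ω E : Type*} (md : E → Set Ω) (c : E → Set Ω → E) : Prop :=
  ∀ (Ψ : E) (A B : Set Ω),
    md Ψ ⊆ md (c Ψ A) ∧
    (¬ md Ψ ⊆ A → md (c Ψ A) ⊆ md Ψ) ∧
    (A ≠ Set.univ → ¬ md (c Ψ A) ⊆ A) ∧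
    md (c Ψ A) ∩ A ⊆ md Ψ ∧
    md (c Ψ (A ∩ B)) ⊆ md (c Ψ A) ∪ md (c Ψ B) ∧
    (¬ md (c Ψ (A ∩ B)) ⊆ B → md (c Ψ B) ⊆ md (c Ψ (A ∩ B)))

/-- AGM revision operator for the epistemic space `⟨E, md⟩` (postulates R1–R6,
formulated on model sets). -/
def IsRevision {Ω E : Type*} (md : E → Set Ω) (s : E → Set Ω → E) : Prop :=
  ∀ (Ψ : E) (A B : Set Ω),
    md (s Ψ A) ⊆ A ∧
    (md Ψ ∩ A ≠ ∅ → md (s Ψ A) = md Ψ ∩ A) ∧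
    (A ≠ ∅ → md (s Ψ A) ≠ ∅) ∧
    md (s Ψ A) ∩ B ⊆ md (s Ψ (A ∩ B)) ∧
    (md (s Ψ A) ∩ B ≠ ∅ → md (s Ψ (A ∩ B)) ⊆ md (s Ψ A) ∩ B)

/-- Postulate (ZC). -/
def ZC {Ω E : Type*} (md : E → Set Ω) : Prop :=
  ∀ (Ψ : E) (M : Set Ω), md Ψ ⊆ M → ∃ Ψ' : E, md Ψ' = M

/-- Postulate (ZR1). -/
def ZR1 {Ω E : Type*} (md : E → Set Ω) : Prop :=
  ∀ ω : Ω, ∃ Ψ : E, md Ψ = {ω}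

/-- Postulate (ZR2). -/
def ZR2 {Ω E : Type*} (md : E → Set Ω) : Prop :=
  ∀ (Ψ : E) (M : Set Ω), M ⊆ md Ψ → ∃ Ψ' : E, md Ψ' = M

/-- Postulate (Unbiased). -/
def Unbiased {Ω E : Type*} (md : E → Set Ω) : Prop :=
  ∀ M : Set Ω, ∃ Ψ : E, md Ψ = M

/-- Maxichoice contraction operator. -/
def IsMaxichoiceContraction {Ω E : Type*} (md : E → Set Ω) (c : E → Set Ω → E) : Prop :=
  IsContraction md c ∧
    ∀ Ψ : E, ∃ r : Ω → Ω → Prop, IsLinRel r ∧ ∀ A : Set Ω,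
      (¬ md Ψ ⊆ A → md (c Ψ A) = md Ψ) ∧
      (md Ψ ⊆ A → md (c Ψ A) = md Ψ ∪ minSet r Aᶜ)

/-- Linear contraction operator: a maxichoice contraction operator based on one
single linear order for all epistemic states. -/
def IsLinearContraction {Ω E : Type*} (md : E → Set Ω) (c : E → Set Ω → E) : Prop :=
  IsContraction md c ∧
    ∃ r : Ω → Ω → Prop, IsLinRel r ∧ ∀ (Ψ : E) (A : Set Ω),
      (¬ md Ψ ⊆ A → md (c Ψ A) = md Ψ) ∧
      (md Ψ ⊆ A → md (c Ψ A) = md Ψ ∪ minSet r Aᶜ)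

/-- Full meet contraction operator. -/
def IsFullMeetContraction {Ω E : Type*} (md : E → Set Ω) (c : E → Set Ω → E) : Prop :=
  IsContraction md c ∧
    ∀ (Ψ : E) (A : Set Ω),
      (¬ md Ψ ⊆ A → md (c Ψ A) = md Ψ) ∧
      (md Ψ ⊆ A → md (c Ψ A) = md Ψ ∪ Aᶜ)

/-- Maxichoice revision operator. -/
def IsMaxichoiceRevision {Ω E : Type*} (md : E → Set Ω) (s : E → Set Ω → E) : Prop :=
  IsRevision md s ∧
    ∀ Ψ : E, ∃ r : Ω → Ω → Prop, IsLinRel r ∧ ∀ A : Set Ω,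
      (md Ψ ∩ A ≠ ∅ → md (s Ψ A) = md Ψ ∩ A) ∧
      (md Ψ ∩ A = ∅ → md (s Ψ A) = minSet r A)

/-- Linear revision operator: a maxichoice revision operator based on one single
linear order for all epistemic states. -/
def IsLinearRevision {Ω E : Type*} (md : E → Set Ω) (s : E → Set Ω → E) : Prop :=
  IsRevision md s ∧
    ∃ r : Ω → Ω → Prop, IsLinRel r ∧ ∀ (Ψ : E) (A : Set Ω),
      (md Ψ ∩ A ≠ ∅ → md (s Ψ A) = md Ψ ∩ A) ∧
      (md Ψ ∩ A = ∅ → md (s Ψ A) = minSet r A)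

/-- Full meet revision operator. -/
def IsFullMeetRevision {Ω E : Type*} (md : E → Set Ω) (s : E → Set Ω → E) : Prop :=
  IsRevision md s ∧
    ∀ (Ψ : E) (A : Set Ω),
      (md Ψ ∩ A ≠ ∅ → md (s Ψ A) = md Ψ ∩ A) ∧
      (md Ψ ∩ A = ∅ → md (s Ψ A) = A)


/-- There exists a full meet revision operator for `⟨E, md⟩`
iff `⟨E, md⟩` satisfies (Unbiased). -/
theorem fullMeetRevision_iff_unbiased {Ω E : Type*} [Fintype Ω] [Nonempty Ω] [Nonempty E]
    (md : E → Set Ω) :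
    (∃ s : E → Set Ω → E, IsFullMeetRevision md s) ↔ Unbiased md := by
  constructor
  · rintro ⟨s, hrev, hfm⟩ M
    obtain ⟨Ψ⟩ := (inferInstance : Nonempty E)
    have h0 : md (s Ψ ∅) = (∅ : Set Ω) := by
      have := (hfm Ψ ∅).2
      simpa using this
    rcases eq_or_ne M ∅ with rfl | hM
    · exact ⟨s Ψ ∅, h0⟩
    · refine ⟨s (s Ψ ∅) M, ?_⟩
      have := (hfm (s Ψ ∅) M).2
      rw [h0] at this
      simpa using this
  · intro hU
    classical
    set g : Set Ω → Set Ω → Set Ω := fun K A => if K ∩ A = ∅ then A else K ∩ A with hg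
    refine ⟨fun Ψ A => (hU (g (md Ψ) A)).choose, ?_, ?_⟩
    · intro Ψ A B
      have hmd : ∀ (Ψ' : E) (A : Set Ω),
          md ((hU (g (md Ψ') A)).choose) = g (md Ψ') A :=
        fun Ψ' A => (hU (g (md Ψ') A)).choose_spec
      have hsub : g (md Ψ) A ⊆ A := by
        by_cases h : md Ψ ∩ A = ∅
        · simp [hg, h]
        · simp [hg, h, Set.inter_subset_right]
      refine ⟨by rw [hmd]; exact hsub, ?_, ?_, ?_, ?_⟩
      · intro h; rw [hmd]; simp [hg, h]
      · intro hA; rw [hmd]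
        by_cases h : md Ψ ∩ A = ∅ <;> simp [hg, h, hA]
      all_goals rw [hmd, hmd]
      · by_cases h : md Ψ ∩ A = ∅
        · have h2 : md Ψ ∩ (A ∩ B) = ∅ := by
            rw [← Set.inter_assoc]; rw [h]; simp
          simp [hg, h, h2]
        · by_cases h2 : md Ψ ∩ (A ∩ B) = ∅
          · intro x hx
            exfalso
            have : x ∈ md Ψ ∩ (A ∩ B) := by
              simp only [hg, if_neg h] at hx
              exact ⟨hx.1.1, hx.1.2, hx.2⟩
            rw [h2] at this; exact this
          · intro x hx
            simp only [hg, if_neg h] at hx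
            simp only [hg, if_neg h2]
            exact ⟨hx.1.1, hx.1.2, hx.2⟩
      · intro hne
        by_cases h : md Ψ ∩ A = ∅
        · have h2 : md Ψ ∩ (A ∩ B) = ∅ := by
            rw [← Set.inter_assoc, h]; simp
          simp only [hg, if_pos h, if_pos h2]
          exact subset_rfl
        · have h2 : md Ψ ∩ (A ∩ B) ≠ ∅ := by
            rw [← Set.inter_assoc]
            simpa only [hg, if_neg h] using hne
          simp only [hg, if_neg h, if_neg h2]
          rw [← Set.inter_assoc]
    · intro Ψ A
      have hmd := (hU (g (md Ψ) A)).choose_spec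
      constructor
      · intro h; rw [hmd]; simp [hg, h]
      · intro h; rw [hmd]; simp [hg, h]
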